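/- arXiv:1609.06844 — 4 statements merged into one kernel-verified Lean document; each statement's English description precedes it below -/
import Mathlib

section
/- Consider a single good with k ≥ 1 copies allocated to buyers with values v_1, …, v_k and a nondecreasing marginal cost function c on {1,…,k}, with nonnegative total welfare Σ_{n=1}^k (v_n − c(n)) ≥ 0, and suppose the price p* satisfies the profit–surplus equivalence Σ_{n=1}^k (v_n − p*) = p*·k − Σ_{n=1}^k c(n). Then for every t with 1 ≤ t ≤ k, the revenue from selling t copies at price p* covers the production cost of those copies: t·p* ≥ Σ_{n=1}^t c(n). -/
/-- **Revenue covers cost at any sales level.** With nondecreasing marginal costs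
`c`, nonnegative total welfare `∑ (v n − c n) ≥ 0`, and a price `p*` satisfying the
profit–surplus equivalence, the revenue from selling any `t ≤ k` copies at `p*`
covers the cost of producing them: `t·p* ≥ ∑_{n=1}^t c n`. -/
theorem revenue_covers_cost
    (k : ℕ) (hk : 1 ≤ k) (v c : ℕ → ℝ) (p : ℝ)
    (hc_mono : ∀ m n, 1 ≤ m → m ≤ n → n ≤ k → c m ≤ c n)
    (hW : 0 ≤ ∑ n ∈ Finset.Icc 1 k, (v n - c n))
    (heq : ∑ n ∈ Finset.Icc 1 k, (v n - p) =
      p * k - ∑ n ∈ Finset.Icc 1 k, c n) :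
    ∀ t, 1 ≤ t → t ≤ k → ∑ n ∈ Finset.Icc 1 t, c n ≤ (t : ℝ) * p := by
  intro t ht htk
  set Sk := ∑ n ∈ Finset.Icc 1 k, c n with hSk
  set St := ∑ n ∈ Finset.Icc 1 t, c n with hSt
  have hcard : (Finset.Icc 1 k).card = k := by simp
  have hsub : ∑ n ∈ Finset.Icc 1 k, (v n - c n)
      = (∑ n ∈ Finset.Icc 1 k, v n) - Sk := Finset.sum_sub_distrib _ _
  have hsub2 : ∑ n ∈ Finset.Icc 1 k, (v n - p)
      = (∑ n ∈ Finset.Icc 1 k, v n) - (k : ℝ) * p := by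
    rw [Finset.sum_sub_distrib, Finset.sum_const, hcard, nsmul_eq_mul]
  have hv : Sk ≤ ∑ n ∈ Finset.Icc 1 k, v n := by
    rw [hsub] at hW; linarith
  have hkp : Sk ≤ (k : ℝ) * p := by
    rw [hsub2] at heq; linarith
  -- monotonicity: k * St ≤ t * Sk
  have hsplit : St + ∑ n ∈ Finset.Icc (t+1) k, c n = Sk := by
    rw [hSt, hSk, ← Finset.sum_union]
    · congr 1
      ext a
      simp only [Finset.mem_union, Finset.mem_Icc]
      omega
    · apply Finset.disjoint_left.mpr
      intro a ha hb
      simp only [Finset.mem_Icc] at ha hb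
      omega
  have h1 : St ≤ (t : ℝ) * c t := by
    calc St ≤ ∑ n ∈ Finset.Icc 1 t, c t := by
          apply Finset.sum_le_sum
          intro i hi
          simp only [Finset.mem_Icc] at hi
          exact hc_mono i t hi.1 hi.2 htk
      _ = (t : ℝ) * c t := by simp [mul_comm]
  have h2 : ((k - t : ℕ) : ℝ) * c t ≤ ∑ n ∈ Finset.Icc (t+1) k, c n := by
    calc ((k - t : ℕ) : ℝ) * c t = ∑ n ∈ Finset.Icc (t+1) k, c t := by
          rw [Finset.sum_const, Nat.card_Icc, nsmul_eq_mul]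
          congr 2
          omega
      _ ≤ ∑ n ∈ Finset.Icc (t+1) k, c n := by
          apply Finset.sum_le_sum
          intro i hi
          simp only [Finset.mem_Icc] at hi
          exact hc_mono t i ht (by omega) hi.2
  have hmono : (k : ℝ) * St ≤ (t : ℝ) * Sk := by
    have hkt : ((k - t : ℕ) : ℝ) = (k : ℝ) - (t : ℝ) := by
      push_cast [Nat.cast_sub htk]; ring
    rw [hkt] at h2
    have ht0 : (0 : ℝ) ≤ (t : ℝ) := Nat.cast_nonneg t
    have hkt0 : (0 : ℝ) ≤ (k : ℝ) - (t : ℝ) := by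
      exact sub_nonneg.mpr (by exact_mod_cast htk)
    nlinarith [mul_le_mul_of_nonneg_left h1 hkt0, mul_le_mul_of_nonneg_left h2 ht0]
  have hk0 : (0 : ℝ) < (k : ℝ) := by exact_mod_cast hk
  have ht0 : (0 : ℝ) ≤ (t : ℝ) := Nat.cast_nonneg t
  nlinarith [mul_le_mul_of_nonneg_left hkp ht0]
end

section
/- Let I be a finite set, let v be a subadditive set function on subsets of I (i.e., v(S ∪ T) ≤ v(S) + v(T) for all S, T ⊆ I), let p be a real number, let A ⊆ I, and let B ⊆ A maximize the utility v(S) − p·|S| over all subsets S ⊆ A. Then for every T ⊆ I, v(B \ T) ≥ p·|B \ T|. -/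
/-- **Demanded bundles retain per-item value (Part I of the structural lemma).**
If `v` is subadditive on subsets of the finite ground set `I`, and `B ⊆ A`
maximizes the utility `v S − p·|S|` over all `S ⊆ A`, then for every `T ⊆ I`,
`v (B \ T) ≥ p·|B \ T|`. -/
theorem demanded_bundle_retains_value
    {ι : Type*} [DecidableEq ι] (I : Finset ι) (v : Finset ι → ℝ)
    (hsub : ∀ S T : Finset ι, S ⊆ I → T ⊆ I → v (S ∪ T) ≤ v S + v T)
    (p : ℝ) (A : Finset ι) (hA : A ⊆ I) (B : Finset ι) (hB : B ⊆ A)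
    (hmax : ∀ S ⊆ A, v S - p * S.card ≤ v B - p * B.card) :
    ∀ T ⊆ I, p * ((B \ T).card : ℝ) ≤ v (B \ T) := by
  intro T hT
  have hBA : B ⊆ I := hB.trans hA
  have h1 : v (B ∩ T) - p * (B ∩ T).card ≤ v B - p * B.card :=
    hmax _ ((Finset.inter_subset_left).trans hB)
  have h2 : v B ≤ v (B \ T) + v (B ∩ T) := by
    have := hsub (B \ T) (B ∩ T) ((Finset.sdiff_subset).trans hBA)
      ((Finset.inter_subset_left).trans hBA)
    rwa [Finset.sdiff_union_inter] at this
  have hcard : (B.card : ℝ) = (B \ T).card + (B ∩ T).card := by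
    rw [← Nat.cast_add, Finset.card_sdiff_add_card_inter]
  have h3 : p * (B.card : ℝ) = p * ((B \ T).card : ℝ) + p * ((B ∩ T).card : ℝ) := by
    rw [hcard]; ring
  linarith
end

section
/- Let I be a finite set of M goods with M ≥ 2, and let v be a monotone subadditive set function on subsets of I with v(∅) = 0 (hence v is nonnegative). Then for every A ⊆ I there exist a price p̂ ≥ 0 and a subset B ⊆ A such that: (i) for every T ⊆ I, v(B \ T) ≥ p̂·|B \ T|, and (ii) 2e·log₂(M)·p̂·|B| ≥ v(A). -/
open Real Finset

section Aux

variable {ι : Type*} [DecidableEq ι]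

private lemma sal_nonneg (I : Finset ι) (v : Finset ι → ℝ)
    (hmono : ∀ S T : Finset ι, S ⊆ T → T ⊆ I → v S ≤ v T) (h0 : v ∅ = 0)
    {S : Finset ι} (hS : S ⊆ I) : 0 ≤ v S := by
  have := hmono ∅ S (Finset.empty_subset S) hS
  rw [h0] at this; exact this

private lemma sal_sum (I : Finset ι) (v : Finset ι → ℝ)
    (hsub : ∀ S T : Finset ι, S ⊆ I → T ⊆ I → v (S ∪ T) ≤ v S + v T)
    (h0 : v ∅ = 0) :
    ∀ A : Finset ι, A ⊆ I → v A ≤ ∑ i ∈ A, v {i} := by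
  intro A
  induction A using Finset.induction_on with
  | empty => intro _; simp [h0]
  | @insert a s hx ih =>
    intro hAI
    have ha : ({a} : Finset ι) ⊆ I := by
      intro y hy; simp at hy; subst hy; exact hAI (Finset.mem_insert_self _ _)
    have hs : s ⊆ I := fun y hy => hAI (Finset.mem_insert_of_mem hy)
    have h1 : v (insert a s) ≤ v {a} + v s := by
      have := hsub {a} s ha hs
      rwa [← Finset.insert_eq] at this
    rw [Finset.sum_insert hx]
    have := ih hs
    linarith

/-- Exp inequality: `(1-1/L)^(L-1) ≥ e⁻¹` for `L ≥ 2`. -/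
private lemma sal_exp {L : ℝ} (hL : 2 ≤ L) :
    Real.exp (-1) ≤ (1 - 1/L) ^ (L - 1) := by
  have hL1 : (0:ℝ) < L - 1 := by linarith
  have hL0 : (0:ℝ) < L := by linarith
  have h2 : L/(L-1) ≤ Real.exp (1/(L-1)) := by
    have := Real.add_one_le_exp (1/(L-1))
    have he : 1/(L-1) + 1 = L/(L-1) := by field_simp; ring
    linarith [he ▸ this]
  have h1 : Real.exp (-(1/(L-1))) ≤ 1 - 1/L := by
    rw [Real.exp_neg]
    have hb : (0:ℝ) < L/(L-1) := by positivity
    have : (L/(L-1))⁻¹ ≤ 1 - 1/L → (Real.exp (1/(L-1)))⁻¹ ≤ 1 - 1/L := by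
      intro h
      exact le_trans (inv_anti₀ hb h2) h
    apply this
    rw [inv_div]
    rw [div_le_iff₀ hL0]
    field_simp
    exact le_refl 1
  calc Real.exp (-1) = Real.exp (-(1/(L-1)) * (L-1)) := by
        congr 1; field_simp
    _ = (Real.exp (-(1/(L-1)))) ^ (L - 1) := Real.exp_mul _ _
    _ ≤ (1 - 1/L) ^ (L - 1) :=
        Real.rpow_le_rpow (Real.exp_pos _).le h1 hL1.le

/-- Main induction: for `L ≥ 2` we find a price and set with the demand
property and value at least `v A · c · (1-1/L)^(log₂ |A|)` where
`c = L/(2(L-1))`. -/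
private lemma sal_aux (I : Finset ι) (v : Finset ι → ℝ)
    (hsub : ∀ S T : Finset ι, S ⊆ I → T ⊆ I → v (S ∪ T) ≤ v S + v T)
    (hmono : ∀ S T : Finset ι, S ⊆ T → T ⊆ I → v S ≤ v T)
    (h0 : v ∅ = 0) (L : ℝ) (hL : 2 ≤ L) :
    ∀ n : ℕ, ∀ A : Finset ι, A.card ≤ n → A ⊆ I →
      ∃ p : ℝ, ∃ B : Finset ι, 0 ≤ p ∧ B ⊆ A ∧
        (∀ S ⊆ B, p * (S.card : ℝ) ≤ v S) ∧
        v A * (L / (2*(L-1)) * ((1 - 1/L) ^ Real.logb 2 (A.card : ℝ)))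
          ≤ L * (p * B.card) := by
  have hL0 : (0:ℝ) < L := by linarith
  have hb0 : (0:ℝ) < 1 - 1/L := by
    have : 1/L ≤ 1/2 := by rw [div_le_div_iff₀ hL0 (by norm_num)]; linarith
    linarith
  have hb1 : 1 - 1/L ≤ 1 := by
    have : (0:ℝ) < 1/L := by positivity
    linarith
  have hc0 : (0:ℝ) < L / (2*(L-1)) := by
    have : (0:ℝ) < L - 1 := by linarith
    positivity
  have hcb : L / (2*(L-1)) * (1 - 1/L) = 1/2 := by
    have h1 : L - 1 ≠ 0 := by intro h; linarith [h]
    field_simp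
  intro n
  induction n with
  | zero =>
    intro A hA _
    have : A = ∅ := Finset.card_eq_zero.mp (Nat.le_zero.mp hA)
    subst this
    refine ⟨0, ∅, le_refl 0, Finset.Subset.refl _, ?_, ?_⟩
    · intro S hS
      have : S = ∅ := Finset.subset_empty.mp hS
      subst this; simp [h0]
    · simp [h0]
  | succ n ih =>
    intro A hAn hAI
    have hvA0 : 0 ≤ v A := sal_nonneg I v hmono h0 hAI
    rcases eq_or_lt_of_le hvA0 with hvA | hvA
    · -- v A = 0 : trivial
      refine ⟨0, ∅, le_refl 0, Finset.empty_subset _, ?_, ?_⟩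
      · intro S hS
        have : S = ∅ := Finset.subset_empty.mp hS
        subst this; simp [h0]
      · rw [← hvA]; simp
    -- now 0 < v A, so A ≠ ∅
    have hAne : A.Nonempty := by
      rcases A.eq_empty_or_nonempty with h | h
      · exfalso; rw [h, h0] at hvA; exact lt_irrefl 0 hvA
      · exact h
    have hnA1 : 1 ≤ A.card := Finset.card_pos.mpr hAne
    have hnA0 : (0:ℝ) < A.card := by exact_mod_cast hnA1
    set p : ℝ := v A / (L * A.card) with hp_def
    have hp : 0 < p := by positivity
    obtain ⟨B, hBmem, hBmax⟩ := Finset.exists_max_image A.powerset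
      (fun T => v T - p * T.card) ⟨∅, Finset.mem_powerset.mpr (Finset.empty_subset A)⟩
    have hBA : B ⊆ A := Finset.mem_powerset.mp hBmem
    -- demand property
    have key : ∀ S ⊆ B, p * (S.card : ℝ) ≤ v S := by
      intro S hS
      have h1 : v (B \ S) - p * ((B \ S).card : ℝ) ≤ v B - p * B.card :=
        hBmax (B \ S) (Finset.mem_powerset.mpr ((Finset.sdiff_subset).trans hBA))
      have hcard : ((B \ S).card : ℝ) = (B.card : ℝ) - S.card := by
        rw [Finset.card_sdiff_of_subset hS]
        exact_mod_cast Nat.cast_sub (Finset.card_le_card hS)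
      have h2 : v B ≤ v (B \ S) + v S := by
        have := hsub (B \ S) S ((Finset.sdiff_subset).trans (hBA.trans hAI))
          (hS.trans (hBA.trans hAI))
        rwa [Finset.sdiff_union_self_eq_union, Finset.union_eq_left.mpr hS] at this
      rw [hcard] at h1
      linarith
    have hfB : v A - p * A.card ≤ v B - p * B.card :=
      hBmax A (Finset.mem_powerset.mpr (Finset.Subset.refl A))
    have hpn : p * A.card = v A / L := by
      rw [hp_def]; field_simp
    have hvB_lb : v A * (1 - 1/L) ≤ v B := by
      have hpB : 0 ≤ p * B.card := by positivity
      have : v A * (1 - 1/L) = v A - v A / L := by field_simp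
      rw [this]
      rw [hpn] at hfB
      linarith
    have hBne : B.Nonempty := by
      rcases B.eq_empty_or_nonempty with h | h
      · exfalso
        have h1 : v B - p * B.card = 0 := by rw [h]; simp [h0]
        have h2 : 0 < v A * (1 - 1/L) := by positivity
        have hid : v A * (1 - 1/L) = v A - v A / L := by field_simp
        rw [hpn] at hfB
        linarith
      · exact h
    have hB1 : 1 ≤ B.card := Finset.card_pos.mpr hBne
    rcases le_or_gt (2 * B.card) A.card with hhalf | hhalf
    · -- recurse on B
      have hBlt : B.card < A.card := by omega
      obtain ⟨p', B', hp', hB'B, hkey', hbound'⟩ :=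
        ih B (by omega) (hBA.trans hAI)
      refine ⟨p', B', hp', hB'B.trans hBA, hkey', ?_⟩
      have hvB0 : 0 ≤ v B := sal_nonneg I v hmono h0 (hBA.trans hAI)
      have hB0 : (0:ℝ) < B.card := by exact_mod_cast hB1
      -- logb 2 |B| ≤ logb 2 |A| - 1
      have e1 : Real.logb 2 (B.card : ℝ) ≤ Real.logb 2 (A.card : ℝ) - 1 := by
        have h1 : (B.card : ℝ) ≤ (A.card : ℝ) / 2 := by
          rw [le_div_iff₀ (by norm_num)]
          have : (2 * B.card : ℝ) ≤ A.card := by exact_mod_cast hhalf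
          linarith
        have h2 : Real.logb 2 (B.card : ℝ) ≤ Real.logb 2 ((A.card : ℝ)/2) :=
          (Real.logb_le_logb (by norm_num) hB0 (by positivity)).mpr h1
        rw [Real.logb_div (ne_of_gt hnA0) (by norm_num),
          Real.logb_self_eq_one (by norm_num)] at h2
        exact h2
      have e2 : (1 - 1/L) ^ (Real.logb 2 (A.card : ℝ) - 1)
          ≤ (1 - 1/L) ^ Real.logb 2 (B.card : ℝ) :=
        Real.rpow_le_rpow_of_exponent_ge hb0 hb1 e1
      have e3 : (1 - 1/L) ^ Real.logb 2 (A.card : ℝ)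
          = (1 - 1/L) ^ (Real.logb 2 (A.card : ℝ) - 1) * (1 - 1/L) := by
        rw [← Real.rpow_add_one (ne_of_gt hb0)]
        ring_nf
      have h4 : v A * (1 - 1/L) * (L / (2*(L-1)) * ((1 - 1/L) ^ (Real.logb 2 (A.card : ℝ) - 1)))
          ≤ v B * (L / (2*(L-1)) * ((1 - 1/L) ^ Real.logb 2 (B.card : ℝ))) := by
        apply mul_le_mul hvB_lb
        · exact mul_le_mul_of_nonneg_left e2 hc0.le
        · positivity
        · exact hvB0
      calc v A * (L / (2*(L-1)) * ((1 - 1/L) ^ Real.logb 2 (A.card : ℝ)))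
          = v A * (1 - 1/L) * (L / (2*(L-1)) * ((1 - 1/L) ^ (Real.logb 2 (A.card : ℝ) - 1))) := by
            rw [e3]; ring
        _ ≤ v B * (L / (2*(L-1)) * ((1 - 1/L) ^ Real.logb 2 (B.card : ℝ))) := h4
        _ ≤ L * (p' * B'.card) := hbound'
    · -- output (p, B)
      refine ⟨p, B, hp.le, hBA, key, ?_⟩
      have hRHS : L * (p * B.card) = v A * ((B.card : ℝ) / A.card) := by
        rw [hp_def]; field_simp
      rw [hRHS]
      apply mul_le_mul_of_nonneg_left _ hvA0
      -- need: c * b ^ logb 2 |A| ≤ |B|/|A|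
      have hBle : B.card ≤ A.card := Finset.card_le_card hBA
      rcases eq_or_lt_of_le hnA1 with h1 | h1
      · -- |A| = 1, hence B = A and |B| = 1
        have hBcard : B.card = A.card := by omega
        rw [hBcard, ← h1]
        simp only [Nat.cast_one, Real.logb_one, Real.rpow_zero, mul_one, div_one]
        rw [div_le_one (by linarith)]; linarith
      · -- |A| ≥ 2
        have hnA2 : 2 ≤ A.card := h1
        have e4 : (1:ℝ) ≤ Real.logb 2 (A.card : ℝ) := by
          have : Real.logb 2 (2:ℝ) ≤ Real.logb 2 (A.card : ℝ) :=
            (Real.logb_le_logb (by norm_num) (by norm_num) hnA0).mpr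
              (by exact_mod_cast hnA2)
          rwa [Real.logb_self_eq_one (by norm_num)] at this
        have e5 : (1 - 1/L) ^ Real.logb 2 (A.card : ℝ) ≤ (1 - 1/L) := by
          have := Real.rpow_le_rpow_of_exponent_ge hb0 hb1 e4
          rwa [Real.rpow_one] at this
        have e6 : L / (2*(L-1)) * ((1 - 1/L) ^ Real.logb 2 (A.card : ℝ)) ≤ 1/2 := by
          calc L / (2*(L-1)) * ((1 - 1/L) ^ Real.logb 2 (A.card : ℝ))
              ≤ L / (2*(L-1)) * (1 - 1/L) := mul_le_mul_of_nonneg_left e5 hc0.le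
            _ = 1/2 := hcb
        have e7 : (1:ℝ)/2 ≤ (B.card : ℝ) / A.card := by
          rw [div_le_div_iff₀ (by norm_num) hnA0]
          have : (A.card : ℝ) < 2 * B.card := by exact_mod_cast hhalf
          linarith
        linarith
end Aux

/-- **Structural lemma for subadditive valuations.** Let `I` be a finite set of
`M ≥ 2` goods and `v` a monotone subadditive set function with `v ∅ = 0`. Then
for every `A ⊆ I` there exist a price `p̂ ≥ 0` and `B ⊆ A` such that
(i) `v (B \ T) ≥ p̂·|B \ T|` for all `T ⊆ I`, and
(ii) `2e·log₂(M)·p̂·|B| ≥ v A`. -/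
theorem subadditive_structural_lemma
    {ι : Type*} [DecidableEq ι] (I : Finset ι) (hM : 2 ≤ I.card)
    (v : Finset ι → ℝ)
    (hsub : ∀ S T : Finset ι, S ⊆ I → T ⊆ I → v (S ∪ T) ≤ v S + v T)
    (hmono : ∀ S T : Finset ι, S ⊆ T → T ⊆ I → v S ≤ v T)
    (h0 : v ∅ = 0) :
    ∀ A ⊆ I, ∃ (p : ℝ) (B : Finset ι), 0 ≤ p ∧ B ⊆ A ∧
      (∀ T ⊆ I, p * ((B \ T).card : ℝ) ≤ v (B \ T)) ∧
      v A ≤ 2 * Real.exp 1 * Real.logb 2 I.card * (p * B.card) := by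
  intro A hAI
  have hM2 : (2:ℝ) ≤ (I.card : ℝ) := by exact_mod_cast hM
  have hL1 : 1 ≤ Real.logb 2 (I.card : ℝ) := by
    have : Real.logb 2 (2:ℝ) ≤ Real.logb 2 (I.card : ℝ) :=
      (Real.logb_le_logb (by norm_num) (by norm_num) (by linarith)).mpr hM2
    rwa [Real.logb_self_eq_one (by norm_num)] at this
  have he2 : (2:ℝ) ≤ Real.exp 1 := by linarith [Real.add_one_le_exp 1]
  by_cases hI3 : I.card ≤ 3
  · -- small case: use the best singleton
    rcases A.eq_empty_or_nonempty with hA | hAne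
    · subst hA
      refine ⟨0, ∅, le_refl 0, Finset.Subset.refl _, ?_, ?_⟩
      · intro T _; simp [h0]
      · simp [h0]
    obtain ⟨x, hxA, hxmax⟩ := Finset.exists_max_image A (fun i => v {i}) hAne
    have hxI : ({x} : Finset ι) ⊆ I :=
      Finset.singleton_subset_iff.mpr (hAI hxA)
    have hpx : 0 ≤ v {x} := sal_nonneg I v hmono h0 hxI
    refine ⟨v {x}, {x}, hpx, Finset.singleton_subset_iff.mpr hxA, ?_, ?_⟩
    · intro T _
      rcases Finset.subset_singleton_iff.mp (Finset.sdiff_subset (s := {x}) (t := T))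
        with h | h
      · rw [h]; simp [h0]
      · rw [h]; simp
    · have hsum : v A ≤ ∑ i ∈ A, v {i} := sal_sum I v hsub h0 A hAI
      have hsum2 : ∑ i ∈ A, v {i} ≤ A.card • v {x} :=
        Finset.sum_le_card_nsmul A _ _ (fun i hi => hxmax i hi)
      have hcard3 : A.card ≤ 3 := le_trans (Finset.card_le_card hAI) hI3
      have h3 : v A ≤ 3 * v {x} := by
        have : (A.card : ℝ) * v {x} ≤ 3 * v {x} := by
          apply mul_le_mul_of_nonneg_right _ hpx
          exact_mod_cast hcard3
        rw [nsmul_eq_mul] at hsum2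
        linarith
      have hcard1 : (({x} : Finset ι).card : ℝ) = 1 := by simp
      rw [hcard1, mul_one]
      have hLpos : 0 < Real.logb 2 (I.card : ℝ) := by linarith
      nlinarith [mul_le_mul_of_nonneg_right hL1 hpx,
        mul_le_mul_of_nonneg_right he2 hpx]
  · -- big case: I.card ≥ 4, so logb 2 I.card ≥ 2
    push_neg at hI3
    have hM4 : (4:ℝ) ≤ (I.card : ℝ) := by exact_mod_cast hI3
    set L : ℝ := Real.logb 2 (I.card : ℝ) with hL_def
    have hL2 : 2 ≤ L := by
      have h4 : Real.logb 2 (4:ℝ) ≤ L :=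
        (Real.logb_le_logb (by norm_num) (by norm_num) (by linarith)).mpr hM4
      have : Real.logb 2 (4:ℝ) = 2 := by
        have h42 : (4:ℝ) = 2^(2:ℕ) := by norm_num
        rw [h42, Real.logb, Real.log_pow]
        have : Real.log 2 ≠ 0 := by
          have := Real.log_pos (by norm_num : (1:ℝ) < 2)
          linarith
        field_simp
        norm_num
      linarith [this ▸ h4]
    have hb0 : (0:ℝ) < 1 - 1/L := by
      have hL0 : (0:ℝ) < L := by linarith
      have : 1/L ≤ 1/2 := by rw [div_le_div_iff₀ hL0 (by norm_num)]; linarith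
      linarith
    obtain ⟨p, B, hp, hBA, hkey, hbound⟩ :=
      sal_aux I v hsub hmono h0 L hL2 A.card A le_rfl hAI
    refine ⟨p, B, hp, hBA, fun T _ => hkey _ Finset.sdiff_subset, ?_⟩
    -- show c * b ^ logb 2 |A| ≥ 1/(2e)
    have hlA : Real.logb 2 (A.card : ℝ) ≤ L := by
      rcases Nat.eq_zero_or_pos A.card with h | h
      · rw [h]; simp [Real.logb_zero]; linarith
      · have hA0 : (0:ℝ) < A.card := by exact_mod_cast h
        have hAcard : (A.card : ℝ) ≤ I.card := by
          exact_mod_cast Finset.card_le_card hAI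
        exact (Real.logb_le_logb (by norm_num) hA0 (by linarith)).mpr hAcard
    have e1 : (1 - 1/L) ^ L ≤ (1 - 1/L) ^ Real.logb 2 (A.card : ℝ) :=
      Real.rpow_le_rpow_of_exponent_ge hb0 (by
        have : (0:ℝ) < 1/L := by positivity
        linarith) hlA
    have e2 : (1 - 1/L) ^ L = (1 - 1/L) ^ (L - 1) * (1 - 1/L) := by
      rw [← Real.rpow_add_one (ne_of_gt hb0)]
      ring_nf
    have hcb : L / (2*(L-1)) * (1 - 1/L) = 1/2 := by
      have h1 : L - 1 ≠ 0 := by intro h; linarith [h]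
      field_simp
    have hc0 : (0:ℝ) < L / (2*(L-1)) := by
      have : (0:ℝ) < L - 1 := by linarith
      positivity
    have hexp : Real.exp (-1) ≤ (1 - 1/L) ^ (L - 1) := sal_exp hL2
    have e3 : Real.exp (-1) / 2 ≤ L / (2*(L-1)) * ((1 - 1/L) ^ Real.logb 2 (A.card : ℝ)) := by
      calc Real.exp (-1) / 2
          ≤ (1 - 1/L) ^ (L - 1) / 2 := by linarith
        _ = L / (2*(L-1)) * ((1 - 1/L) ^ (L-1) * (1 - 1/L)) := by
            rw [show L / (2*(L-1)) * ((1 - 1/L) ^ (L-1) * (1 - 1/L))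
              = (1 - 1/L) ^ (L-1) * (L / (2*(L-1)) * (1 - 1/L)) by ring, hcb]
            ring
        _ = L / (2*(L-1)) * ((1 - 1/L) ^ L) := by rw [e2]
        _ ≤ L / (2*(L-1)) * ((1 - 1/L) ^ Real.logb 2 (A.card : ℝ)) :=
            mul_le_mul_of_nonneg_left e1 hc0.le
    have hvA0 : 0 ≤ v A := sal_nonneg I v hmono h0 hAI
    have h5 : v A * (Real.exp (-1) / 2) ≤ L * (p * B.card) :=
      le_trans (mul_le_mul_of_nonneg_left e3 hvA0) hbound
    have hexp1 : Real.exp (-1) = (Real.exp 1)⁻¹ := by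
      rw [← Real.exp_neg]
    have hepos : (0:ℝ) < Real.exp 1 := Real.exp_pos 1
    rw [hexp1] at h5
    -- v A * (e⁻¹/2) ≤ L * (p * |B|)  ⟹  v A ≤ 2 e L (p |B|)
    have h6 : v A ≤ 2 * Real.exp 1 * (L * (p * B.card)) := by
      have := mul_le_mul_of_nonneg_left h5 (by positivity : (0:ℝ) ≤ 2 * Real.exp 1)
      calc v A = 2 * Real.exp 1 * (v A * ((Real.exp 1)⁻¹ / 2)) := by
            field_simp
        _ ≤ 2 * Real.exp 1 * (L * (p * B.card)) := this
    calc v A ≤ 2 * Real.exp 1 * (L * (p * B.card)) := h6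
      _ = 2 * Real.exp 1 * L * (p * B.card) := by ring
end

section
/- Let I be a finite set of M goods with M ≥ 2, let v_1, …, v_N be monotone subadditive set functions on subsets of I with v_j(∅) = 0 for each j, and let (A_1, …, A_N) be pairwise disjoint subsets of I (an allocation). Then there exist prices p̂¹, …, p̂ᴺ ≥ 0 and subsets B_j ⊆ A_j such that: (i) for every buyer j and every T ⊆ I, v_j(B_j \ T) ≥ p̂ʲ·|B_j \ T|, and (ii) 2e·log₂(M)·Σ_{j=1}^N p̂ʲ·|B_j| ≥ Σ_{j=1}^N v_j(A_j). -/
open Finset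

/-- Real harmonic numbers. -/
noncomputable def Hr (n : ℕ) : ℝ := ∑ i ∈ Finset.range n, ((i : ℝ) + 1)⁻¹

lemma Hr_eq_harmonic (n : ℕ) : Hr n = (harmonic n : ℝ) := by
  unfold Hr harmonic
  push_cast
  rfl

lemma Hr_mono {m n : ℕ} (h : m ≤ n) : Hr m ≤ Hr n := by
  apply Finset.sum_le_sum_of_subset_of_nonneg (Finset.range_subset_range.2 h)
  intro i _ _
  positivity

lemma one_le_Hr {n : ℕ} (h : 1 ≤ n) : 1 ≤ Hr n := by
  have : Hr 1 = 1 := by simp [Hr]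
  calc (1:ℝ) = Hr 1 := this.symm
    _ ≤ Hr n := Hr_mono h

lemma Hr_gap {n s : ℕ} (hs : s ≤ n) (hn : 0 < n) :
    (s : ℝ) ≤ (Hr n - Hr (n - s)) * n := by
  have key : Hr n - Hr (n - s) = ∑ i ∈ Finset.Ico (n - s) n, ((i : ℝ) + 1)⁻¹ := by
    rw [Finset.sum_Ico_eq_sub _ (Nat.sub_le n s)]
    rfl
  have hlb : (s : ℝ) * (n : ℝ)⁻¹ ≤ ∑ i ∈ Finset.Ico (n - s) n, ((i : ℝ) + 1)⁻¹ := by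
    have : ∀ i ∈ Finset.Ico (n - s) n, (n : ℝ)⁻¹ ≤ ((i : ℝ) + 1)⁻¹ := by
      intro i hi
      rw [Finset.mem_Ico] at hi
      have hi1 : (i : ℝ) + 1 ≤ (n : ℝ) := by exact_mod_cast hi.2
      have : (0:ℝ) < (i : ℝ) + 1 := by positivity
      exact inv_anti₀ this hi1
    calc (s : ℝ) * (n : ℝ)⁻¹ = ∑ _i ∈ Finset.Ico (n - s) n, (n : ℝ)⁻¹ := by
          rw [Finset.sum_const, Nat.card_Ico, Nat.sub_sub_self hs, nsmul_eq_mul]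
      _ ≤ _ := Finset.sum_le_sum this
  have hn' : (0:ℝ) < n := by exact_mod_cast hn
  rw [key]
  calc (s : ℝ) = (s : ℝ) * (n : ℝ)⁻¹ * n := by field_simp
    _ ≤ _ := by exact mul_le_mul_of_nonneg_right hlb hn'.le

/-- Single-buyer structural lemma with harmonic-number loss. -/
lemma key_lemma {ι : Type*} [DecidableEq ι] (I : Finset ι) (v : Finset ι → ℝ)
    (hsub : ∀ S T : Finset ι, S ⊆ I → T ⊆ I → v (S ∪ T) ≤ v S + v T)
    (hmono : ∀ S T : Finset ι, S ⊆ T → T ⊆ I → v S ≤ v T)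
    (h0 : v ∅ = 0) (A : Finset ι) :
    A ⊆ I → ∃ (p : ℝ) (B : Finset ι), 0 ≤ p ∧ B ⊆ A ∧
      (∀ S ⊆ B, p * (S.card : ℝ) ≤ v S) ∧
      v A ≤ Hr A.card * (p * (B.card : ℝ)) := by
  induction A using Finset.strongInduction with
  | _ A IH =>
  intro hAI
  have vnn : ∀ S ⊆ I, 0 ≤ v S := fun S h => h0 ▸ hmono ∅ S (Finset.empty_subset S) h
  rcases A.eq_empty_or_nonempty with rfl | hAne
  · exact ⟨0, ∅, le_refl 0, Finset.Subset.refl _,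
      fun S hS => by simp [Finset.subset_empty.mp hS, h0], by simp [h0]⟩
  obtain ⟨S₀, hS₀mem, hS₀min⟩ := Finset.exists_min_image
    (A.powerset.filter Finset.Nonempty) (fun S => v S / S.card)
    ⟨A, by simp [Finset.mem_filter, hAne]⟩
  rw [Finset.mem_filter, Finset.mem_powerset] at hS₀mem
  obtain ⟨hS₀A, hS₀ne⟩ := hS₀mem
  set p₀ : ℝ := v S₀ / S₀.card with hp₀def
  have hS₀c : (0:ℝ) < S₀.card := by exact_mod_cast Finset.card_pos.2 hS₀ne
  have hp₀ : 0 ≤ p₀ := div_nonneg (vnn _ (hS₀A.trans hAI)) hS₀c.le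
  have her : ∀ S ⊆ A, p₀ * (S.card : ℝ) ≤ v S := by
    intro S hS
    rcases S.eq_empty_or_nonempty with rfl | hSne
    · simp [h0]
    · have hmin := hS₀min S (by simp [Finset.mem_filter, Finset.mem_powerset, hS, hSne])
      have hSc : (0:ℝ) < S.card := by exact_mod_cast Finset.card_pos.2 hSne
      calc p₀ * (S.card : ℝ) ≤ (v S / S.card) * S.card :=
            mul_le_mul_of_nonneg_right hmin hSc.le
        _ = v S := div_mul_cancel₀ _ hSc.ne'
  have vS₀eq : v S₀ = p₀ * S₀.card := (div_mul_cancel₀ _ hS₀c.ne').symm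
  have hAc : (0:ℝ) < A.card := by exact_mod_cast Finset.card_pos.2 hAne
  by_cases hSA : S₀ = A
  · refine ⟨p₀, A, hp₀, Finset.Subset.refl _, her, ?_⟩
    have h1 : 1 ≤ Hr A.card := one_le_Hr (Finset.card_pos.2 hAne)
    have hvA : v A = p₀ * A.card := by rw [← hSA]; exact hSA ▸ vS₀eq
    have : 0 ≤ p₀ * (A.card : ℝ) := mul_nonneg hp₀ (Nat.cast_nonneg _)
    nlinarith
  · set A' := A \ S₀ with hA'def
    have hA'ss : A' ⊂ A := Finset.sdiff_ssubset hS₀A hS₀ne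
    obtain ⟨p', B', hp', hB'A', her', hv'⟩ := IH A' hA'ss (hA'ss.subset.trans hAI)
    have hcard : A'.card = A.card - S₀.card := Finset.card_sdiff_of_subset hS₀A
    have hsc : S₀.card ≤ A.card := Finset.card_le_card hS₀A
    have hunion : S₀ ∪ A' = A := Finset.union_sdiff_of_subset hS₀A
    have vsplit : v A ≤ v S₀ + v A' := by
      have := hsub S₀ A' (hS₀A.trans hAI) (hA'ss.subset.trans hAI)
      rwa [hunion] at this
    have hgap : (S₀.card : ℝ) ≤ (Hr A.card - Hr A'.card) * A.card := by
      rw [hcard]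
      exact Hr_gap hsc (Finset.card_pos.2 hAne)
    have hHns : 0 ≤ Hr A'.card := by
      rcases Nat.eq_zero_or_pos A'.card with h | h
      · simp [h, Hr]
      · linarith [one_le_Hr h]
    have hb'nn : 0 ≤ p' * (B'.card : ℝ) := mul_nonneg hp' (Nat.cast_nonneg _)
    by_cases hc : p' * (B'.card : ℝ) ≤ p₀ * (A.card : ℝ)
    · refine ⟨p₀, A, hp₀, Finset.Subset.refl _, her, ?_⟩
      have h1 : p₀ * (S₀.card : ℝ) ≤ p₀ * ((Hr A.card - Hr A'.card) * A.card) :=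
        mul_le_mul_of_nonneg_left hgap hp₀
      nlinarith [mul_le_mul_of_nonneg_left hc hHns]
    · push_neg at hc
      refine ⟨p', B', hp', hB'A'.trans hA'ss.subset, her', ?_⟩
      have h1 : p₀ * (S₀.card : ℝ) ≤ p₀ * ((Hr A.card - Hr A'.card) * A.card) :=
        mul_le_mul_of_nonneg_left hgap hp₀
      have hgap0 : 0 ≤ Hr A.card - Hr A'.card := by
        have hs1 : (1:ℝ) ≤ (S₀.card : ℝ) := by exact_mod_cast Finset.card_pos.2 hS₀ne
        nlinarith
      nlinarith [mul_le_mul_of_nonneg_left hc.le hgap0,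
        mul_nonneg hp₀ hAc.le]

/-- **Structural corollary for allocations to subadditive buyers.** Let `I` be a
finite set of `M ≥ 2` goods, `v 1, …, v N` monotone subadditive normalized set
functions, and `(A 1, …, A N)` pairwise disjoint bundles in `I`. Then there are
prices `p̂ j ≥ 0` and sub-bundles `B j ⊆ A j` with
(i) `v j (B j \ T) ≥ p̂ j · |B j \ T|` for all `j` and `T ⊆ I`, and
(ii) `2e·log₂(M)·∑ j, p̂ j·|B j| ≥ ∑ j, v j (A j)`. -/
theorem subadditive_structural_corollary
    {ι : Type*} [DecidableEq ι] (I : Finset ι) (hM : 2 ≤ I.card)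
    (N : ℕ) (v : Fin N → Finset ι → ℝ)
    (hsub : ∀ j, ∀ S T : Finset ι, S ⊆ I → T ⊆ I → v j (S ∪ T) ≤ v j S + v j T)
    (hmono : ∀ j, ∀ S T : Finset ι, S ⊆ T → T ⊆ I → v j S ≤ v j T)
    (h0 : ∀ j, v j ∅ = 0)
    (A : Fin N → Finset ι) (hA : ∀ j, A j ⊆ I)
    (hdisj : ∀ j j', j ≠ j' → Disjoint (A j) (A j')) :
    ∃ (p : Fin N → ℝ) (B : Fin N → Finset ι),
      (∀ j, 0 ≤ p j) ∧ (∀ j, B j ⊆ A j) ∧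
      (∀ j, ∀ T ⊆ I, p j * (((B j) \ T).card : ℝ) ≤ v j ((B j) \ T)) ∧
      ∑ j, v j (A j) ≤
        2 * Real.exp 1 * Real.logb 2 I.card * ∑ j, p j * ((B j).card : ℝ) := by
  have h := fun j => key_lemma I (v j) (hsub j) (hmono j) (h0 j) (A j) (hA j)
  choose p B hp hBA her hv using h
  refine ⟨p, B, hp, hBA, ?_, ?_⟩
  · intro j T _
    exact her j _ (Finset.sdiff_subset)
  · set C : ℝ := 2 * Real.exp 1 * Real.logb 2 I.card with hCdef
    have hM1 : (2:ℝ) ≤ (I.card : ℝ) := by exact_mod_cast hM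
    have hlog2 : (0:ℝ) < Real.log 2 := Real.log_pos one_lt_two
    have hl2M : Real.log 2 ≤ Real.log I.card := Real.log_le_log (by norm_num) hM1
    have hl21 : Real.log 2 ≤ 1 := by
      linarith [Real.log_two_lt_d9]
    have he : (1:ℝ) ≤ Real.exp 1 := by linarith [Real.exp_one_gt_d9]
    have hlM : 0 ≤ Real.log I.card := le_trans hlog2.le hl2M
    have hHC : ∀ n ≤ I.card, Hr n ≤ C := by
      intro n hn
      have h1 : Hr n ≤ Hr I.card := Hr_mono hn
      have h2 : Hr I.card ≤ 1 + Real.log I.card := by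
        rw [Hr_eq_harmonic]
        exact_mod_cast harmonic_le_one_add_log I.card
      have h3 : 1 + Real.log I.card ≤ C := by
        rw [hCdef, Real.logb, div_eq_mul_inv]
        have key : (1 + Real.log I.card) * Real.log 2 ≤
            2 * Real.exp 1 * Real.log I.card := by
          nlinarith
        calc 1 + Real.log I.card
            = (1 + Real.log I.card) * Real.log 2 * (Real.log 2)⁻¹ := by field_simp
          _ ≤ 2 * Real.exp 1 * Real.log I.card * (Real.log 2)⁻¹ := by
              apply mul_le_mul_of_nonneg_right key (by positivity)
          _ = 2 * Real.exp 1 * (Real.log I.card * (Real.log 2)⁻¹) := by ring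
      linarith
    have hterm : ∀ j, v j (A j) ≤ C * (p j * ((B j).card : ℝ)) := by
      intro j
      have h1 := hv j
      have h2 : Hr (A j).card ≤ C := hHC _ (Finset.card_le_card (hA j))
      have h3 : 0 ≤ p j * ((B j).card : ℝ) := mul_nonneg (hp j) (by positivity)
      nlinarith
    calc ∑ j, v j (A j) ≤ ∑ j, C * (p j * ((B j).card : ℝ)) :=
          Finset.sum_le_sum (fun j _ => hterm j)
      _ = C * ∑ j, p j * ((B j).card : ℝ) := by rw [Finset.mul_sum]
end
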